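/- There exists a constant C > 0 such that for every s ≥ 2 and every smooth function u : ℝ × ℝ³ → ℝ that vanishes outside the future light cone K, one has (∫_{ℝ³} |x|^{−2} |u(√(s² + |x|²), x)|² dx)^{1/2} ≤ C Σ_{a=1}^{3} (∫_{ℝ³} |∂̄_a u(√(s² + |x|²), x)|² dx)^{1/2}. -/

import Mathlib

noncomputable section
open MeasureTheory

/-- Spatial part: Euclidean 3-space. -/
abbrev E3 : Type := EuclideanSpace ℝ (Fin 3)

/-- Spacetime points `(t, x) ∈ ℝ × ℝ³`. -/
abbrev Spt : Type := ℝ × E3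

/-- Time derivative `∂_t`. -/
def dt (u : Spt → ℝ) : Spt → ℝ := fun p => fderiv ℝ u p (1, 0)

/-- Spatial derivative `∂_a`, `a = 1,2,3`. -/
def dx (a : Fin 3) (u : Spt → ℝ) : Spt → ℝ :=
  fun p => fderiv ℝ u p (0, EuclideanSpace.single a 1)

/-- Semi-hyperboloidal derivative `∂̄_a = (x^a/t) ∂_t + ∂_a`. -/
def shd (a : Fin 3) (u : Spt → ℝ) : Spt → ℝ :=
  fun p => (p.2 a / p.1) * dt u p + dx a u p

/-- The future light cone `K = {(t,x) : |x| < t − 1}`. -/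
def lightCone : Set Spt := {p : Spt | ‖p.2‖ < p.1 - 1}

namespace HardyAux

/-- squared norm as a finite sum -/
def ns (x : E3) : ℝ := ∑ a, x a ^ 2

lemma ns_eq (x : E3) : ns x = ‖x‖ ^ 2 := by
  rw [EuclideanSpace.norm_eq, Real.sq_sqrt (by positivity)]
  simp [ns, sq_abs]

lemma ns_nonneg (x : E3) : 0 ≤ ns x := by rw [ns_eq]; positivity

lemma ns_cont : Continuous ns := by
  unfold ns; exact continuous_finset_sum _ fun a _ =>
    ((EuclideanSpace.proj a : E3 →L[ℝ] ℝ).continuous).pow 2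

/-- derivative of `ns` -/
def Wd (x : E3) : E3 →L[ℝ] ℝ := ∑ a, (2 * x a) • (EuclideanSpace.proj a : E3 →L[ℝ] ℝ)

lemma hWd (x : E3) : HasFDerivAt ns (Wd x) x := by
  have h := HasFDerivAt.sum (fun a (_ : a ∈ Finset.univ) =>
    ((EuclideanSpace.proj a : E3 →L[ℝ] ℝ).hasFDerivAt (x := x)).mul
     ((EuclideanSpace.proj a : E3 →L[ℝ] ℝ).hasFDerivAt (x := x)))
  have e1 : ns = (fun y : E3 => ∑ a, y a * y a) := by
    funext y; simp [ns, sq]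
  have e2 : Wd x = ∑ a : Fin 3, (x a • (EuclideanSpace.proj a : E3 →L[ℝ] ℝ)
      + x a • (EuclideanSpace.proj a : E3 →L[ℝ] ℝ)) := by
    unfold Wd
    refine Finset.sum_congr rfl fun a _ => ?_
    ext v; simp; ring
  rw [e1, e2]; exact h

lemma Wd_single (x : E3) (b : Fin 3) : Wd x (EuclideanSpace.single b 1) = 2 * x b := by
  simp [Wd, Finset.sum_eq_single b, EuclideanSpace.single_apply]

/-- Cauchy-Schwarz in ℝ³. -/
lemma cs3 (v d : Fin 3 → ℝ) :
    |∑ a, v a * d a| ≤ Real.sqrt (∑ a, v a ^ 2) * Real.sqrt (∑ a, d a ^ 2) := by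
  have h1 : (∑ a, v a * d a) ^ 2 ≤ (∑ a, v a ^ 2) * (∑ a, d a ^ 2) := by
    simp only [Fin.sum_univ_three]
    nlinarith [sq_nonneg (v 0 * d 1 - v 1 * d 0), sq_nonneg (v 0 * d 2 - v 2 * d 0),
      sq_nonneg (v 1 * d 2 - v 2 * d 1)]
  calc |∑ a, v a * d a| = Real.sqrt ((∑ a, v a * d a) ^ 2) := (Real.sqrt_sq_eq_abs _).symm
    _ ≤ Real.sqrt ((∑ a, v a ^ 2) * (∑ a, d a ^ 2)) := Real.sqrt_le_sqrt h1
    _ = Real.sqrt (∑ a, v a ^ 2) * Real.sqrt (∑ a, d a ^ 2) :=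
        Real.sqrt_mul (by positivity) _

/-- The key ε-regularized Hardy estimate. -/
lemma step_eps (z : E3 → ℝ) (D : Fin 3 → E3 → ℝ) (L : E3 → E3 →L[ℝ] ℝ)
    (hzd : ∀ x, HasFDerivAt z (L x) x)
    (hLD : ∀ a x, L x (EuclideanSpace.single a 1) = D a x)
    (hDc : ∀ a, Continuous (D a))
    (hDsupp : ∀ a, HasCompactSupport (D a))
    (hsupp : HasCompactSupport z)
    (ε : ℝ) (hε : 0 < ε) :
    ∫ x : E3, z x ^ 2 * ns x / (ns x + ε ^ 2) ^ 2 ≤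
      4 * ∫ x : E3, ∑ a, (D a x) ^ 2 := by
  have hzc : Continuous z := by
    rw [continuous_iff_continuousAt]; exact fun x => (hzd x).continuousAt
  set W : E3 → ℝ := fun x => ns x + ε ^ 2 with hWdef
  have hW0 : ∀ x, 0 < W x := fun x => by
    have := ns_nonneg x; simp only [hWdef]; positivity
  have hWc : Continuous W := ns_cont.add continuous_const
  have hWne : ∀ x, W x ≠ 0 := fun x => (hW0 x).ne'
  -- compact support and integrability helpers
  have hcsF : ∀ F : E3 → ℝ, (∀ x, z x = 0 → F x = 0) → HasCompactSupport F := by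
    intro F h0
    exact HasCompactSupport.intro hsupp fun x hx => h0 x (image_eq_zero_of_notMem_tsupport hx)
  have hintF : ∀ F : E3 → ℝ, Continuous F → (∀ x, z x = 0 → F x = 0) → Integrable F :=
    fun F hF h0 => hF.integrable_of_hasCompactSupport (hcsF F h0)
  -- the gradient-square quantities
  set Q : E3 → ℝ := fun x => Real.sqrt (∑ a, (D a x) ^ 2) with hQdef
  have hQc : Continuous Q :=
    Real.continuous_sqrt.comp (continuous_finset_sum _ fun a _ => (hDc a).pow 2)
  have hQ0 : ∀ x, 0 ≤ Q x := fun x => Real.sqrt_nonneg _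
  have hQsq : ∀ x, Q x ^ 2 = ∑ a, (D a x) ^ 2 := fun x =>
    Real.sq_sqrt (by positivity)
  have hDsum_supp : HasCompactSupport fun x => ∑ a, (D a x) ^ 2 := by
    have e : (fun x => ∑ a, (D a x) ^ 2)
        = (fun x => (D 0 x) ^ 2 + ((D 1 x) ^ 2 + (D 2 x) ^ 2)) := by
      funext x; rw [Fin.sum_univ_three]; ring
    rw [e]
    have h2 : ∀ a : Fin 3, HasCompactSupport fun x => (D a x) ^ 2 := by
      intro a
      exact (hDsupp a).comp_left (g := fun t : ℝ => t ^ 2) (by norm_num)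
    exact (h2 0).add ((h2 1).add (h2 2))
  have hQsupp : HasCompactSupport Q :=
    hDsum_supp.comp_left (g := Real.sqrt) Real.sqrt_zero
  set B : ℝ := ∫ x : E3, ∑ a, (D a x) ^ 2 with hBdef
  have hBint : Integrable fun x : E3 => ∑ a, (D a x) ^ 2 :=
    (continuous_finset_sum _ fun a _ => (hDc a).pow 2).integrable_of_hasCompactSupport hDsum_supp
  have hBnonneg : 0 ≤ B := integral_nonneg fun x => by positivity
  -- P-quantity
  set P : E3 → ℝ := fun x => |z x| * Real.sqrt (ns x) / W x with hPdef
  have hPc : Continuous P := ((hzc.abs.mul (Real.continuous_sqrt.comp ns_cont)).div hWc hWne)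
  have hP0 : ∀ x, 0 ≤ P x := fun x => by
    have := hW0 x; have := ns_nonneg x; simp only [hPdef]; positivity
  have hPsq : ∀ x, P x ^ 2 = z x ^ 2 * ns x / W x ^ 2 := by
    intro x
    simp only [hPdef, div_pow, mul_pow, sq_abs, Real.sq_sqrt (ns_nonneg x)]
  set A : ℝ := ∫ x : E3, z x ^ 2 * ns x / W x ^ 2 with hAdef
  have hAint : Integrable fun x : E3 => z x ^ 2 * ns x / W x ^ 2 :=
    hintF _ (((hzc.pow 2).mul ns_cont).div (hWc.pow 2) fun x => pow_ne_zero 2 (hWne x))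
      (fun x hx => by simp [hx])
  have hAnonneg : 0 ≤ A := integral_nonneg fun x => by
    have := hW0 x; have := ns_nonneg x; positivity
  -- derivatives
  have hz2d : ∀ x, HasFDerivAt (fun y => z y ^ 2) ((2 * z x) • L x) x := by
    intro x
    have h := (hzd x).mul (hzd x)
    have e1 : (z * z) = fun y => z y ^ 2 := by funext y; rw [Pi.mul_apply]; ring
    have e2 : z x • L x + z x • L x = (2 * z x) • L x := by
      ext v; simp; ring
    rw [e1, e2] at h; exact h
  have hWd' : ∀ x, HasFDerivAt W (Wd x) x := fun x => (hWd x).add_const _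
  have hgd : ∀ (a : Fin 3) (x : E3), HasFDerivAt (fun y : E3 => y a / W y)
      (x a • ((-(W x ^ 2)⁻¹) • Wd x) + (W x)⁻¹ • (EuclideanSpace.proj a : E3 →L[ℝ] ℝ)) x := by
    intro a x
    have hinv : HasFDerivAt (fun y : E3 => (W y)⁻¹) ((-(W x ^ 2)⁻¹) • Wd x) x :=
      (hasDerivAt_inv (hWne x)).comp_hasFDerivAt x (hWd' x)
    have hmul := ((EuclideanSpace.proj a : E3 →L[ℝ] ℝ).hasFDerivAt (x := x)).mul hinv
    have e : (fun y : E3 => y a / W y) = fun y : E3 => y a * (W y)⁻¹ := by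
      funext y; rw [div_eq_mul_inv]
    rw [e]
    exact hmul
  have hf1 : ∀ (a : Fin 3) (x : E3),
      fderiv ℝ (fun y => z y ^ 2) x (EuclideanSpace.single a 1) = 2 * z x * D a x := by
    intro a x
    rw [(hz2d x).fderiv]
    simp [hLD a x, mul_assoc]
  have hg1 : ∀ (a : Fin 3) (x : E3),
      fderiv ℝ (fun y : E3 => y a / W y) x (EuclideanSpace.single a 1)
        = (W x - 2 * x a ^ 2) / W x ^ 2 := by
    intro a x
    rw [(hgd a x).fderiv]
    have hx := hWne x
    have hev : (x a • ((-(W x ^ 2)⁻¹) • Wd x)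
        + (W x)⁻¹ • (EuclideanSpace.proj a : E3 →L[ℝ] ℝ)) (EuclideanSpace.single a 1)
        = x a * ((-(W x ^ 2)⁻¹) * (2 * x a)) + (W x)⁻¹ := by
      simp [Wd_single, EuclideanSpace.single_apply]
    rw [hev]
    field_simp
    ring
  -- integration by parts for each direction
  have ibp : ∀ a : Fin 3,
      ∫ x : E3, z x ^ 2 * ((W x - 2 * x a ^ 2) / W x ^ 2) =
      - ∫ x : E3, (2 * z x * D a x) * (x a / W x) := by
    intro a
    have hga_c : Continuous fun x : E3 => x a / W x :=
      ((EuclideanSpace.proj a : E3 →L[ℝ] ℝ).continuous).div hWc hWne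
    have hgd_c : Continuous fun x : E3 => (W x - 2 * x a ^ 2) / W x ^ 2 :=
      ((hWc.sub ((continuous_const.mul (((EuclideanSpace.proj a : E3 →L[ℝ] ℝ).continuous).pow 2)))).div
        (hWc.pow 2) fun x => pow_ne_zero 2 (hWne x))
    have int1 : Integrable fun x : E3 => (2 * z x * D a x) * (x a / W x) :=
      hintF _ (((continuous_const.mul hzc).mul (hDc a)).mul hga_c)
        (fun x hx => by simp [hx])
    have int2 : Integrable fun x : E3 => z x ^ 2 * ((W x - 2 * x a ^ 2) / W x ^ 2) :=
      hintF _ ((hzc.pow 2).mul hgd_c) (fun x hx => by simp [hx])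
    have int3 : Integrable fun x : E3 => z x ^ 2 * (x a / W x) :=
      hintF _ ((hzc.pow 2).mul hga_c) (fun x hx => by simp [hx])
    have e := integral_mul_fderiv_eq_neg_fderiv_mul_of_integrable (μ := (volume : Measure E3))
        (f := fun y => z y ^ 2) (g := fun y : E3 => y a / W y)
        (v := EuclideanSpace.single a 1)
        (by
          have : (fun x : E3 => fderiv ℝ (fun y => z y ^ 2) x (EuclideanSpace.single a 1)
              * (x a / W x)) = fun x : E3 => (2 * z x * D a x) * (x a / W x) := by
            funext x; rw [hf1 a x]
          rw [this]; exact int1)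
        (by
          have : (fun x : E3 => z x ^ 2
              * fderiv ℝ (fun y : E3 => y a / W y) x (EuclideanSpace.single a 1))
              = fun x : E3 => z x ^ 2 * ((W x - 2 * x a ^ 2) / W x ^ 2) := by
            funext x; rw [hg1 a x]
          rw [this]; exact int2)
        int3
        (fun x _ => ((hzd x).differentiableAt).pow 2)
        (fun x _ => (hgd a x).differentiableAt)
    calc ∫ x : E3, z x ^ 2 * ((W x - 2 * x a ^ 2) / W x ^ 2)
        = ∫ x : E3, z x ^ 2
            * fderiv ℝ (fun y : E3 => y a / W y) x (EuclideanSpace.single a 1) := by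
          refine integral_congr_ae (Filter.Eventually.of_forall fun x => ?_)
          simp only [hg1]
      _ = - ∫ x : E3, fderiv ℝ (fun y => z y ^ 2) x (EuclideanSpace.single a 1)
            * (x a / W x) := e
      _ = - ∫ x : E3, (2 * z x * D a x) * (x a / W x) := by
          congr 1
          refine integral_congr_ae (Filter.Eventually.of_forall fun x => ?_)
          simp only [hf1]
  -- summed identities
  have int1' : ∀ a : Fin 3, Integrable fun x : E3 => (2 * z x * D a x) * (x a / W x) := by
    intro a
    exact hintF _ (((continuous_const.mul hzc).mul (hDc a)).mul
      (((EuclideanSpace.proj a : E3 →L[ℝ] ℝ).continuous).div hWc hWne))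
      (fun x hx => by simp [hx])
  have int2' : ∀ a : Fin 3, Integrable fun x : E3 => z x ^ 2 * ((W x - 2 * x a ^ 2) / W x ^ 2) := by
    intro a
    exact hintF _ ((hzc.pow 2).mul
      ((hWc.sub ((continuous_const.mul (((EuclideanSpace.proj a : E3 →L[ℝ] ℝ).continuous).pow 2)))).div
        (hWc.pow 2) fun x => pow_ne_zero 2 (hWne x)))
      (fun x hx => by simp [hx])
  have hmid : ∫ x : E3, z x ^ 2 * ((ns x + 3 * ε ^ 2) / W x ^ 2)
      = - ∫ x : E3, 2 * z x * (∑ a, x a * D a x) / W x := by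
    have lhs_eq : ∫ x : E3, z x ^ 2 * ((ns x + 3 * ε ^ 2) / W x ^ 2)
        = ∑ a : Fin 3, ∫ x : E3, z x ^ 2 * ((W x - 2 * x a ^ 2) / W x ^ 2) := by
      rw [← integral_finset_sum _ fun a _ => int2' a]
      refine integral_congr_ae (Filter.Eventually.of_forall fun x => ?_)
      have hx := hWne x
      show z x ^ 2 * ((ns x + 3 * ε ^ 2) / W x ^ 2)
          = ∑ a : Fin 3, z x ^ 2 * ((W x - 2 * x a ^ 2) / W x ^ 2)
      rw [← Finset.mul_sum]
      congr 1
      rw [← Finset.sum_div]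
      congr 1
      have : ∑ a : Fin 3, (W x - 2 * x a ^ 2) = 3 * W x - 2 * ns x := by
        rw [Fin.sum_univ_three]
        simp only [ns, Fin.sum_univ_three]
        ring
      rw [this]
      simp only [hWdef]
      ring
    have rhs_eq : ∑ a : Fin 3, ∫ x : E3, (2 * z x * D a x) * (x a / W x)
        = ∫ x : E3, 2 * z x * (∑ a, x a * D a x) / W x := by
      rw [← integral_finset_sum _ fun a _ => int1' a]
      refine integral_congr_ae (Filter.Eventually.of_forall fun x => ?_)
      have hx := hWne x
      show ∑ a : Fin 3, (2 * z x * D a x) * (x a / W x)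
          = 2 * z x * (∑ a, x a * D a x) / W x
      rw [Finset.mul_sum, Finset.sum_div]
      refine Finset.sum_congr rfl fun a _ => ?_
      field_simp
    rw [lhs_eq, ← rhs_eq]
    rw [Finset.sum_congr rfl fun a _ => ibp a, ← Finset.sum_neg_distrib]
  -- the integrand comparison
  have hRint : Integrable fun x : E3 => 2 * z x * (∑ a, x a * D a x) / W x := by
    refine hintF _ ?_ (fun x hx => by simp [hx])
    refine ((continuous_const.mul hzc).mul ?_).div hWc hWne
    exact continuous_finset_sum _ fun a _ =>
      ((EuclideanSpace.proj a : E3 →L[ℝ] ℝ).continuous).mul (hDc a)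
  have hPQint : Integrable fun x : E3 => 2 * (P x * Q x) :=
    hintF _ (continuous_const.mul (hPc.mul hQc)) (fun x hx => by simp [hPdef, hx])
  have hptw : ∀ x, |2 * z x * (∑ a, x a * D a x) / W x| ≤ 2 * (P x * Q x) := by
    intro x
    have hcs := cs3 (fun a => x a) (fun a => D a x)
    have hW := hW0 x
    rw [abs_div, abs_of_pos hW, abs_mul, abs_mul, abs_two]
    have h2 : 2 * (P x * Q x) = 2 * |z x| * (Real.sqrt (ns x) * Q x) / W x := by
      simp only [hPdef]; ring
    rw [h2]
    gcongr
    calc |∑ a, x a * D a x|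
        ≤ Real.sqrt (∑ a, x a ^ 2) * Real.sqrt (∑ a, (D a x) ^ 2) := hcs
      _ = Real.sqrt (ns x) * Q x := rfl
  -- Hölder's inequality with p = q = 2
  have holder : ∫ x : E3, P x * Q x ≤ Real.sqrt A * Real.sqrt B := by
    have hconj : Real.HolderConjugate 2 2 := ⟨by norm_num, by norm_num, by norm_num⟩
    have hP2 : MemLp P (ENNReal.ofReal 2) volume :=
      hPc.memLp_of_hasCompactSupport (hcsF P fun x hx => by simp [hPdef, hx])
    have hQ2 : MemLp Q (ENNReal.ofReal 2) volume :=
      hQc.memLp_of_hasCompactSupport hQsupp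
    have h := integral_mul_le_Lp_mul_Lq_of_nonneg hconj
      (Filter.Eventually.of_forall hP0) (Filter.Eventually.of_forall hQ0) hP2 hQ2
    have e1 : ∫ x : E3, P x ^ (2 : ℝ) = A := by
      rw [hAdef]
      refine integral_congr_ae (Filter.Eventually.of_forall fun x => ?_)
      show P x ^ (2 : ℝ) = z x ^ 2 * ns x / W x ^ 2
      rw [show ((2 : ℝ)) = ((2 : ℕ) : ℝ) by norm_num, Real.rpow_natCast, hPsq x]
    have e2 : ∫ x : E3, Q x ^ (2 : ℝ) = B := by
      rw [hBdef]
      refine integral_congr_ae (Filter.Eventually.of_forall fun x => ?_)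
      show Q x ^ (2 : ℝ) = ∑ a, (D a x) ^ 2
      rw [show ((2 : ℝ)) = ((2 : ℕ) : ℝ) by norm_num, Real.rpow_natCast, hQsq x]
    rw [e1, e2, ← Real.sqrt_eq_rpow, ← Real.sqrt_eq_rpow] at h
    exact h
  -- assemble the ε-level inequality A ≤ 2 √A √B
  have hmidint : Integrable fun x : E3 => z x ^ 2 * ((ns x + 3 * ε ^ 2) / W x ^ 2) :=
    hintF _ ((hzc.pow 2).mul ((ns_cont.add continuous_const).div (hWc.pow 2)
      fun x => pow_ne_zero 2 (hWne x))) (fun x hx => by simp [hx])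
  have key : A ≤ 2 * (Real.sqrt A * Real.sqrt B) := by
    have h1 : A ≤ ∫ x : E3, z x ^ 2 * ((ns x + 3 * ε ^ 2) / W x ^ 2) := by
      rw [hAdef]
      refine integral_mono hAint hmidint fun x => ?_
      have hW := hW0 x
      have hns := ns_nonneg x
      rw [mul_div_assoc]
      gcongr
      linarith [sq_nonneg ε]
    have h3 : - (∫ x : E3, 2 * z x * (∑ a, x a * D a x) / W x)
        ≤ ∫ x : E3, |2 * z x * (∑ a, x a * D a x) / W x| := by
      have hni := norm_integral_le_integral_norm
        (f := fun x : E3 => 2 * z x * (∑ a, x a * D a x) / W x) (μ := (volume : Measure E3))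
      simp only [Real.norm_eq_abs] at hni
      exact (neg_le_abs _).trans hni
    have h4 : ∫ x : E3, |2 * z x * (∑ a, x a * D a x) / W x|
        ≤ ∫ x : E3, 2 * (P x * Q x) :=
      integral_mono hRint.abs hPQint hptw
    have h5 : ∫ x : E3, 2 * (P x * Q x) = 2 * ∫ x : E3, P x * Q x :=
      integral_const_mul 2 _
    calc A ≤ ∫ x : E3, z x ^ 2 * ((ns x + 3 * ε ^ 2) / W x ^ 2) := h1
      _ = - ∫ x : E3, 2 * z x * (∑ a, x a * D a x) / W x := hmid
      _ ≤ ∫ x : E3, |2 * z x * (∑ a, x a * D a x) / W x| := h3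
      _ ≤ ∫ x : E3, 2 * (P x * Q x) := h4
      _ = 2 * ∫ x : E3, P x * Q x := h5
      _ ≤ 2 * (Real.sqrt A * Real.sqrt B) := by linarith [holder]
  have hfinal : A ≤ 4 * B := by
    nlinarith [Real.sq_sqrt hAnonneg, Real.sq_sqrt hBnonneg, Real.sqrt_nonneg A,
      Real.sqrt_nonneg B, sq_nonneg (Real.sqrt A - 2 * Real.sqrt B)]
  exact hfinal

/-- Hardy's inequality in ℝ³ for compactly supported differentiable functions. -/
lemma hardy_aux (z : E3 → ℝ) (D : Fin 3 → E3 → ℝ) (L : E3 → E3 →L[ℝ] ℝ)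
    (hzd : ∀ x, HasFDerivAt z (L x) x)
    (hLD : ∀ a x, L x (EuclideanSpace.single a 1) = D a x)
    (hDc : ∀ a, Continuous (D a))
    (hsupp : HasCompactSupport z) :
    Real.sqrt (∫ x : E3, ‖x‖⁻¹ ^ 2 * z x ^ 2) ≤
      2 * ∑ a : Fin 3, Real.sqrt (∫ x : E3, (D a x) ^ 2) := by
  have hzc : Continuous z := by
    rw [continuous_iff_continuousAt]; exact fun x => (hzd x).continuousAt
  have hDsupp : ∀ a, HasCompactSupport (D a) := by
    intro a
    have hLs : HasCompactSupport (fderiv ℝ z) := hsupp.fderiv (𝕜 := ℝ)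
    have h1 : HasCompactSupport fun x => fderiv ℝ z x (EuclideanSpace.single a 1) :=
      hLs.comp_left (g := fun T : E3 →L[ℝ] ℝ => T (EuclideanSpace.single a 1)) rfl
    have e : (fun x => fderiv ℝ z x (EuclideanSpace.single a 1)) = D a := by
      funext x; rw [(hzd x).fderiv]; exact hLD a x
    rwa [e] at h1
  set B : ℝ := ∫ x : E3, ∑ a, (D a x) ^ 2 with hBdef
  have hDsum_supp : HasCompactSupport fun x : E3 => ∑ a, (D a x) ^ 2 := by
    have e : (fun x : E3 => ∑ a, (D a x) ^ 2)
        = (fun x => (D 0 x) ^ 2 + ((D 1 x) ^ 2 + (D 2 x) ^ 2)) := by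
      funext x; rw [Fin.sum_univ_three]; ring
    rw [e]
    have h2 : ∀ a : Fin 3, HasCompactSupport fun x => (D a x) ^ 2 := fun a =>
      (hDsupp a).comp_left (g := fun t : ℝ => t ^ 2) (by norm_num)
    exact (h2 0).add ((h2 1).add (h2 2))
  have hBa : ∀ a : Fin 3, Integrable fun x : E3 => (D a x) ^ 2 := fun a =>
    ((hDc a).pow 2 : Continuous fun x : E3 => (D a x) ^ 2).integrable_of_hasCompactSupport
      ((hDsupp a).comp_left (g := fun t : ℝ => t ^ 2) (by norm_num) :
        HasCompactSupport fun x : E3 => (D a x) ^ 2)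
  have hB_eq : B = ∑ a : Fin 3, ∫ x : E3, (D a x) ^ 2 := by
    rw [hBdef, integral_finset_sum _ fun a _ => hBa a]
  have hBnonneg : 0 ≤ B := integral_nonneg fun x => by positivity
  -- uniform-in-ε bound from step_eps
  have hstep : ∀ n : ℕ,
      ∫ x : E3, z x ^ 2 * ns x / (ns x + (((n : ℝ) + 1)⁻¹) ^ 2) ^ 2 ≤ 4 * B :=
    fun n => step_eps z D L hzd hLD hDc hDsupp hsupp _ (by positivity)
  -- pass to the limit ε → 0
  have hTnonneg : ∀ x : E3, 0 ≤ ‖x‖⁻¹ ^ 2 * z x ^ 2 := fun x => by positivity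
  have hTm : Measurable fun x : E3 => ‖x‖⁻¹ ^ 2 * z x ^ 2 := by
    exact ((measurable_norm.inv).pow_const 2).mul ((hzc.measurable).pow_const 2)
  set G : ℕ → E3 → ℝ := fun n x => z x ^ 2 * ns x / (ns x + (((n : ℝ) + 1)⁻¹) ^ 2) ^ 2
    with hGdef
  have hGc : ∀ n, Continuous (G n) := by
    intro n
    refine ((hzc.pow 2).mul ns_cont).div ((ns_cont.add continuous_const).pow 2) fun x => ?_
    have := ns_nonneg x
    positivity
  have hGnonneg : ∀ n (x : E3), 0 ≤ G n x := fun n x => by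
    have h1 := ns_nonneg x
    simp only [hGdef]
    positivity
  have hGint : ∀ n, Integrable (G n) := by
    intro n
    refine (hGc n).integrable_of_hasCompactSupport ?_
    refine HasCompactSupport.intro hsupp fun x hx => ?_
    have : z x = 0 := image_eq_zero_of_notMem_tsupport hx
    simp [hGdef, this]
  have hae0 : ∀ᵐ x : E3, x ≠ 0 := by
    have h0 : volume ({0} : Set E3) = 0 := measure_singleton 0
    rw [ae_iff]
    simp only [not_not]
    exact h0
  have hlim : ∀ x : E3, x ≠ 0 →
      Filter.Tendsto (fun n => G n x) Filter.atTop (nhds (‖x‖⁻¹ ^ 2 * z x ^ 2)) := by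
    intro x hx
    have hns : 0 < ns x := by
      rw [ns_eq]
      have : ‖x‖ ≠ 0 := norm_ne_zero_iff.mpr hx
      positivity
    have h1 : Filter.Tendsto (fun n : ℕ => ((n : ℝ) + 1)⁻¹) Filter.atTop (nhds 0) := by
      have := tendsto_one_div_add_atTop_nhds_zero_nat (𝕜 := ℝ)
      simp [one_div] at this; exact this
    have hF : ContinuousAt (fun t : ℝ => z x ^ 2 * ns x / (ns x + t ^ 2) ^ 2) 0 := by
      refine ContinuousAt.div continuousAt_const ?_ (by simpa using (by positivity : (0:ℝ) < (ns x + 0 ^ 2) ^ 2).ne')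
      fun_prop
    have h2 := (hF.tendsto).comp h1
    have hval : z x ^ 2 * ns x / (ns x + (0:ℝ) ^ 2) ^ 2 = ‖x‖⁻¹ ^ 2 * z x ^ 2 := by
      have hinv : ‖x‖⁻¹ ^ 2 = (ns x)⁻¹ := by
        rw [inv_pow, ns_eq]
      rw [hinv]
      field_simp
      ring
    rw [← hval]
    exact h2
  -- lintegral bound
  have hTle : ∫⁻ x : E3, ENNReal.ofReal (‖x‖⁻¹ ^ 2 * z x ^ 2) ≤ ENNReal.ofReal (4 * B) := by
    have hGm : ∀ n, Measurable fun x => ENNReal.ofReal (G n x) := fun n =>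
      ENNReal.measurable_ofReal.comp (hGc n).measurable
    have hae : (fun x : E3 => ENNReal.ofReal (‖x‖⁻¹ ^ 2 * z x ^ 2))
        =ᵐ[volume] fun x => Filter.liminf (fun n => ENNReal.ofReal (G n x)) Filter.atTop := by
      filter_upwards [hae0] with x hx
      have ht := (ENNReal.continuous_ofReal.tendsto _).comp (hlim x hx)
      exact (ht.liminf_eq).symm
    calc ∫⁻ x : E3, ENNReal.ofReal (‖x‖⁻¹ ^ 2 * z x ^ 2)
        = ∫⁻ x : E3, Filter.liminf (fun n => ENNReal.ofReal (G n x)) Filter.atTop :=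
          lintegral_congr_ae hae
      _ ≤ Filter.liminf (fun n => ∫⁻ x : E3, ENNReal.ofReal (G n x)) Filter.atTop :=
          lintegral_liminf_le hGm
      _ ≤ ENNReal.ofReal (4 * B) := by
          have hle : ∀ n, ∫⁻ x : E3, ENNReal.ofReal (G n x) ≤ ENNReal.ofReal (4 * B) := by
            intro n
            rw [← ofReal_integral_eq_lintegral_ofReal (hGint n)
              (Filter.Eventually.of_forall (hGnonneg n))]
            exact ENNReal.ofReal_le_ofReal (hstep n)
          calc Filter.liminf (fun n => ∫⁻ x : E3, ENNReal.ofReal (G n x)) Filter.atTop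
              ≤ Filter.liminf (fun _ : ℕ => ENNReal.ofReal (4 * B)) Filter.atTop :=
                Filter.liminf_le_liminf (Filter.Eventually.of_forall hle)
            _ = ENNReal.ofReal (4 * B) := Filter.liminf_const _
  -- the main real bound
  have hmain : ∫ x : E3, ‖x‖⁻¹ ^ 2 * z x ^ 2 ≤ 4 * B := by
    rw [integral_eq_lintegral_of_nonneg_ae (Filter.Eventually.of_forall hTnonneg)
      hTm.aestronglyMeasurable]
    exact ENNReal.toReal_le_of_le_ofReal (by positivity) hTle
  -- conclude
  have hsqB : Real.sqrt B ≤ ∑ a : Fin 3, Real.sqrt (∫ x : E3, (D a x) ^ 2) := by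
    rw [hB_eq, Fin.sum_univ_three, Fin.sum_univ_three]
    set I0 := ∫ x : E3, (D 0 x) ^ 2
    set I1 := ∫ x : E3, (D 1 x) ^ 2
    set I2 := ∫ x : E3, (D 2 x) ^ 2
    have h0 : 0 ≤ I0 := integral_nonneg fun x => by positivity
    have h1 : 0 ≤ I1 := integral_nonneg fun x => by positivity
    have h2 : 0 ≤ I2 := integral_nonneg fun x => by positivity
    have hsum : I0 + I1 + I2 ≤ (Real.sqrt I0 + Real.sqrt I1 + Real.sqrt I2) ^ 2 := by
      nlinarith [Real.sq_sqrt h0, Real.sq_sqrt h1, Real.sq_sqrt h2, Real.sqrt_nonneg I0,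
        Real.sqrt_nonneg I1, Real.sqrt_nonneg I2]
    calc Real.sqrt (I0 + I1 + I2)
        ≤ Real.sqrt ((Real.sqrt I0 + Real.sqrt I1 + Real.sqrt I2) ^ 2) :=
          Real.sqrt_le_sqrt hsum
      _ = Real.sqrt I0 + Real.sqrt I1 + Real.sqrt I2 := Real.sqrt_sq (by positivity)
  calc Real.sqrt (∫ x : E3, ‖x‖⁻¹ ^ 2 * z x ^ 2)
      ≤ Real.sqrt (4 * B) := Real.sqrt_le_sqrt hmain
    _ = 2 * Real.sqrt B := by
        rw [show (4 : ℝ) * B = 2 ^ 2 * B by ring, Real.sqrt_mul (by positivity),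
          Real.sqrt_sq (by norm_num)]
    _ ≤ 2 * ∑ a : Fin 3, Real.sqrt (∫ x : E3, (D a x) ^ 2) := by linarith

end HardyAux

/-- Hardy inequality on hyperboloids, for smooth functions vanishing outside the
future light cone `K`. -/
theorem hardy_inequality_on_hyperboloids :
    ∃ C > (0 : ℝ), ∀ s : ℝ, 2 ≤ s →
      ∀ u : Spt → ℝ, ContDiff ℝ (⊤ : ℕ∞) u →
        (∀ p : Spt, p ∉ lightCone → u p = 0) →
        Real.sqrt (∫ x : E3, ‖x‖⁻¹ ^ 2 * (u (Real.sqrt (s ^ 2 + ‖x‖ ^ 2), x)) ^ 2) ≤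
          C * ∑ a : Fin 3,
            Real.sqrt (∫ x : E3, (shd a u (Real.sqrt (s ^ 2 + ‖x‖ ^ 2), x)) ^ 2) := by
  refine ⟨2, by norm_num, ?_⟩
  intro s hs u hu hvanish
  have hs0 : (0:ℝ) < s := lt_of_lt_of_le (by norm_num) hs
  -- basic facts about the time function
  have hT2 : ∀ x : E3, 2 ≤ Real.sqrt (s ^ 2 + ‖x‖ ^ 2) := by
    intro x
    have h4 : (4:ℝ) ≤ s ^ 2 + ‖x‖ ^ 2 := by nlinarith [norm_nonneg x, sq_nonneg (‖x‖)]
    calc (2:ℝ) = Real.sqrt 4 := by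
          rw [show (4:ℝ) = 2 ^ 2 by norm_num, Real.sqrt_sq (by norm_num)]
      _ ≤ _ := Real.sqrt_le_sqrt h4
  have hTpos : ∀ x : E3, 0 < Real.sqrt (s ^ 2 + ‖x‖ ^ 2) := fun x =>
    lt_of_lt_of_le (by norm_num) (hT2 x)
  have hTne : ∀ x : E3, Real.sqrt (s ^ 2 + ‖x‖ ^ 2) ≠ 0 := fun x => (hTpos x).ne'
  have hsq : ∀ x : E3, s ^ 2 + ‖x‖ ^ 2 = s ^ 2 + HardyAux.ns x := fun x => by
    rw [HardyAux.ns_eq]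
  have hsqpos : ∀ x : E3, 0 < s ^ 2 + HardyAux.ns x := fun x => by
    rw [← hsq x]; positivity
  -- the composed function and its derivative data
  set z : E3 → ℝ := fun x => u (Real.sqrt (s ^ 2 + ‖x‖ ^ 2), x) with hzdef
  set D : Fin 3 → E3 → ℝ := fun a x => shd a u (Real.sqrt (s ^ 2 + ‖x‖ ^ 2), x) with hDdef
  set Td : E3 → E3 →L[ℝ] ℝ :=
    fun x => (1 / (2 * Real.sqrt (s ^ 2 + HardyAux.ns x))) • HardyAux.Wd x with hTddef
  set L : E3 → E3 →L[ℝ] ℝ := fun x =>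
    (fderiv ℝ u (Real.sqrt (s ^ 2 + ‖x‖ ^ 2), x)).comp
      ((Td x).prod (ContinuousLinearMap.id ℝ E3)) with hLdef
  have hud : Differentiable ℝ u := hu.differentiable (by simp)
  have hTd' : ∀ x : E3, HasFDerivAt (fun y : E3 => Real.sqrt (s ^ 2 + ‖y‖ ^ 2)) (Td x) x := by
    intro x
    have e : (fun y : E3 => Real.sqrt (s ^ 2 + ‖y‖ ^ 2))
        = fun y : E3 => Real.sqrt (s ^ 2 + HardyAux.ns y) := by
      funext y; rw [hsq]
    rw [e]
    have hy : s ^ 2 + HardyAux.ns x ≠ 0 := (hsqpos x).ne'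
    have hin : HasFDerivAt (fun y : E3 => s ^ 2 + HardyAux.ns y) (HardyAux.Wd x) x :=
      (HardyAux.hWd x).const_add (s ^ 2)
    exact (Real.hasDerivAt_sqrt hy).comp_hasFDerivAt x hin
  have hphi : ∀ x : E3, HasFDerivAt (fun y : E3 => ((Real.sqrt (s ^ 2 + ‖y‖ ^ 2), y) : Spt))
      ((Td x).prod (ContinuousLinearMap.id ℝ E3)) x := fun x =>
    (hTd' x).prodMk (hasFDerivAt_id x)
  have hzd : ∀ x : E3, HasFDerivAt z (L x) x := by
    intro x
    exact ((hud _).hasFDerivAt).comp x (hphi x)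
  have hTd_single : ∀ (a : Fin 3) (x : E3),
      Td x (EuclideanSpace.single a 1) = x a / Real.sqrt (s ^ 2 + ‖x‖ ^ 2) := by
    intro a x
    have h1 : Real.sqrt (s ^ 2 + ‖x‖ ^ 2) = Real.sqrt (s ^ 2 + HardyAux.ns x) := by rw [hsq]
    simp only [hTddef, ContinuousLinearMap.smul_apply, HardyAux.Wd_single, smul_eq_mul, h1]
    have h2 : Real.sqrt (s ^ 2 + HardyAux.ns x) ≠ 0 := by rw [← h1]; exact hTne x
    field_simp
  have hLD : ∀ (a : Fin 3) (x : E3), L x (EuclideanSpace.single a 1) = D a x := by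
    intro a x
    have hsplit : ((Td x (EuclideanSpace.single a 1), EuclideanSpace.single a 1) : Spt)
        = Td x (EuclideanSpace.single a 1) • ((1:ℝ), (0:E3))
          + ((0:ℝ), EuclideanSpace.single a 1) := by
      ext <;> simp
    calc L x (EuclideanSpace.single a 1)
        = fderiv ℝ u (Real.sqrt (s ^ 2 + ‖x‖ ^ 2), x)
            (Td x (EuclideanSpace.single a 1), EuclideanSpace.single a 1) := rfl
      _ = Td x (EuclideanSpace.single a 1)
            * fderiv ℝ u (Real.sqrt (s ^ 2 + ‖x‖ ^ 2), x) ((1:ℝ), (0:E3))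
          + fderiv ℝ u (Real.sqrt (s ^ 2 + ‖x‖ ^ 2), x) ((0:ℝ), EuclideanSpace.single a 1) := by
          rw [hsplit, map_add]
          congr 1
          rw [ContinuousLinearMap.map_smul, smul_eq_mul]
      _ = D a x := by
          rw [hTd_single a x]
          simp only [hDdef, shd, dt, dx]
  have hfc : Continuous (fderiv ℝ u) := ((hu.fderiv_right (m := 0) (mod_cast le_top)).continuous)
  have hTc : Continuous fun x : E3 => Real.sqrt (s ^ 2 + ‖x‖ ^ 2) :=
    Real.continuous_sqrt.comp (continuous_const.add (continuous_norm.pow 2))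
  have hphic : Continuous fun x : E3 => ((Real.sqrt (s ^ 2 + ‖x‖ ^ 2), x) : Spt) :=
    hTc.prodMk continuous_id
  have hDc : ∀ a, Continuous (D a) := by
    intro a
    refine Continuous.add (Continuous.mul ?_ ?_) ?_
    · exact ((EuclideanSpace.proj a : E3 →L[ℝ] ℝ).continuous).div hTc hTne
    · exact (hfc.comp hphic).clm_apply continuous_const
    · exact (hfc.comp hphic).clm_apply continuous_const
  have hsupp : HasCompactSupport z := by
    refine HasCompactSupport.intro (isCompact_closedBall (0:E3) ((s ^ 2 - 1) / 2))
      fun x hx => ?_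
    have hxn : (s ^ 2 - 1) / 2 < ‖x‖ := by
      simpa [Metric.mem_closedBall, dist_zero_right, not_le] using hx
    refine hvanish _ ?_
    simp only [lightCone, Set.mem_setOf_eq, not_lt]
    have hle : s ^ 2 + ‖x‖ ^ 2 ≤ (‖x‖ + 1) ^ 2 := by nlinarith [norm_nonneg x]
    have : Real.sqrt (s ^ 2 + ‖x‖ ^ 2) ≤ ‖x‖ + 1 := by
      calc Real.sqrt (s ^ 2 + ‖x‖ ^ 2) ≤ Real.sqrt ((‖x‖ + 1) ^ 2) := Real.sqrt_le_sqrt hle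
        _ = ‖x‖ + 1 := Real.sqrt_sq (by positivity)
    linarith
  exact HardyAux.hardy_aux z D L hzd hLD hDc hsupp
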